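/- Suppose K = J ∘ J is diagonalizable over ℝ, i.e. V is the direct sum of the eigenspaces of K. Then: every eigenvalue of K is nonzero; each eigenspace V_t of K is invariant under J; distinct eigenspaces of K are orthogonal with respect to η; the restriction of η to each eigenspace is nondegenerate; and each eigenspace of K has even dimension. -/

import Mathlib

lemma alt_nondeg_even {W : Type*} [AddCommGroup W] [Module ℝ W] [FiniteDimensional ℝ W]
    (B : LinearMap.BilinForm ℝ W) (halt : B.IsAlt) (hnd : B.Nondegenerate) :
    Even (Module.finrank ℝ W) := by
  classical
  let b := Module.finBasis ℝ W
  set n := Module.finrank ℝ W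
  set M := LinearMap.BilinForm.toMatrix b B with hM
  have hdet : M.det ≠ 0 := ((LinearMap.BilinForm.nondegenerate_iff_det_ne_zero b).mp hnd)
  have hskew : M.transpose = -M := by
    ext i j
    simp only [hM, Matrix.transpose_apply, LinearMap.BilinForm.toMatrix_apply, Matrix.neg_apply]
    rw [← halt.neg_eq]
  have h1 : M.det = (-1 : ℝ) ^ n * M.det := by
    conv_lhs => rw [← Matrix.det_transpose, hskew]
    simp [Matrix.det_neg]
  by_contra hodd
  have : (-1 : ℝ) ^ n = -1 := Odd.neg_one_pow (Nat.not_even_iff_odd.mp hodd)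
  rw [this] at h1
  have : M.det = 0 := by linarith
  exact hdet this


/-- If `K = J ∘ J` is diagonalizable over `ℝ` (i.e. `V` is the direct sum of
the eigenspaces of `K`), then every eigenvalue of `K` is nonzero, each eigenspace is
`J`-invariant, distinct eigenspaces are `η`-orthogonal, the restriction of `η` to each
eigenspace is nondegenerate, and each eigenspace has even dimension. -/
theorem stmt_2 {V : Type*} [AddCommGroup V] [Module ℝ V] [FiniteDimensional ℝ V]
    (η θ : V →ₗ[ℝ] V →ₗ[ℝ] ℝ)
    (hηsymm : ∀ a b, η a b = η b a)
    (hηnondeg : ∀ a, (∀ b, η a b = 0) → a = 0)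
    (hθalt : ∀ a, θ a a = 0)
    (hθnondeg : ∀ a, (∀ b, θ a b = 0) → a = 0)
    (J : Module.End ℝ V) (hJ : ∀ a b, θ a b = η (J a) b)
    (K : Module.End ℝ V) (hK : K = J * J)
    (hdiag : (⨆ t : ℝ, K.eigenspace t) = ⊤) :
    (∀ t : ℝ, K.HasEigenvalue t → t ≠ 0) ∧
    (∀ (t : ℝ) (v : V), v ∈ K.eigenspace t → J v ∈ K.eigenspace t) ∧
    (∀ s t : ℝ, s ≠ t →
      ∀ a ∈ K.eigenspace s, ∀ b ∈ K.eigenspace t, η a b = 0) ∧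
    (∀ t : ℝ, K.HasEigenvalue t →
      ∀ a : K.eigenspace t, (∀ b : K.eigenspace t, η (a : V) (b : V) = 0) → a = 0) ∧
    (∀ t : ℝ, K.HasEigenvalue t → Even (Module.finrank ℝ (K.eigenspace t))) := by
  classical
  have hJinj : ∀ a, J a = 0 → a = 0 := by
    intro a ha
    exact hθnondeg a fun b => by rw [hJ, ha]; simp
  have hθskew : ∀ a b, θ a b = -θ b a := by
    intro a b
    have h := hθalt (a + b)
    simp only [map_add, LinearMap.add_apply, hθalt] at h
    linarith
  have hskew : ∀ a b, η (J a) b = - η a (J b) := by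
    intro a b
    rw [← hJ, hθskew, hJ, hηsymm]
  have hKsa : ∀ a b, η (K a) b = η a (K b) := by
    intro a b
    rw [hK]
    show η (J (J a)) b = η a (J (J b))
    rw [hskew (J a) b, hskew a (J b)]
    ring
  have h1 : ∀ t : ℝ, K.HasEigenvalue t → t ≠ 0 := by
    intro t ht h0
    subst h0
    obtain ⟨v, hv⟩ := ht.exists_hasEigenvector
    have hv0 : K v = 0 := by
      have := hv.apply_eq_smul
      simpa using this
    rw [hK] at hv0
    exact hv.2 (hJinj v (hJinj (J v) hv0))
  have h2 : ∀ (t : ℝ) (v : V), v ∈ K.eigenspace t → J v ∈ K.eigenspace t := by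
    intro t v hv
    rw [Module.End.mem_eigenspace_iff] at hv ⊢
    have : K (J v) = J (K v) := by rw [hK]; rfl
    rw [this, hv, map_smul]
  have h3 : ∀ s t : ℝ, s ≠ t → ∀ a ∈ K.eigenspace s, ∀ b ∈ K.eigenspace t, η a b = 0 := by
    intro s t hst a ha b hb
    rw [Module.End.mem_eigenspace_iff] at ha hb
    have h := hKsa a b
    rw [ha, hb, map_smul, LinearMap.smul_apply, map_smul] at h
    have : (s - t) * η a b = 0 := by
      simp only [smul_eq_mul] at h
      ring_nf
      linarith
    rcases mul_eq_zero.mp this with h' | h'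
    · exact absurd (sub_eq_zero.mp h') hst
    · exact h'
  have h4 : ∀ t : ℝ, K.HasEigenvalue t →
      ∀ a : K.eigenspace t, (∀ b : K.eigenspace t, η (a : V) (b : V) = 0) → a = 0 := by
    intro t _ a hab
    have hall : ∀ v : V, η (a : V) v = 0 := by
      intro v
      have hv : v ∈ ⨆ s : ℝ, K.eigenspace s := hdiag ▸ Submodule.mem_top
      refine Submodule.iSup_induction (motive := fun v => η (a : V) v = 0) _ hv ?_ ?_ ?_
      · intro s x hx
        by_cases hs : s = t
        · subst hs; exact hab ⟨x, hx⟩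
        · exact h3 t s (Ne.symm hs) a a.2 x hx
      · simp
      · intro x y hx hy
        rw [map_add, hx, hy, add_zero]
    exact Subtype.ext (hηnondeg _ hall)
  refine ⟨h1, h2, h3, h4, ?_⟩
  intro t ht
  apply alt_nondeg_even (LinearMap.BilinForm.restrict θ (K.eigenspace t))
  · intro x
    simp only [LinearMap.BilinForm.restrict_apply]
    exact hθalt x
  · refine LinearMap.BilinForm.Nondegenerate.ofSeparatingLeft ?_; intro a ha
    have hJa : J (a : V) ∈ K.eigenspace t := h2 t a a.2
    have hzero : ∀ b : K.eigenspace t, η (J (a : V)) (b : V) = 0 := by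
      intro b
      rw [← hJ]
      exact ha b
    have h0 := h4 t ht ⟨J (a : V), hJa⟩ hzero
    have : J (a : V) = 0 := congrArg Subtype.val h0
    exact Subtype.ext (hJinj _ this)
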